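/- There is no canonical hypergroup G with morphisms i₁, i₂ : ℤ/2ℤ → G forming a coproduct of ℤ/2ℤ with itself in the category of canonical hypergroups; i.e., the coproduct ℤ/2ℤ ⊔ ℤ/2ℤ does not exist in the category of canonical hypergroups. -/

import Mathlib

/-- A canonical hypergroup: a commutative, total, associative, reversible
hyperoperation with identity. -/
structure CanHG : Type 1 where
  carrier : Type
  add : carrier → carrier → Set carrier
  zero : carrier
  neg : carrier → carrier
  comm : ∀ x y : carrier, add x y = add y x
  total : ∀ x y : carrier, (add x y).Nonempty
  zero_add : ∀ x : carrier, add zero x = {x}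
  assoc : ∀ x y z : carrier,
    {w | ∃ u ∈ add y z, w ∈ add x u} = {w | ∃ u ∈ add x y, w ∈ add u z}
  rev : ∀ x y z : carrier, x ∈ add y z → z ∈ add x (neg y)

/-- Morphisms of canonical hypergroups: unit-preserving with `f(x+y) ⊆ f(x)+f(y)`. -/
def IsHom (M N : CanHG) (f : M.carrier → N.carrier) : Prop :=
  f M.zero = N.zero ∧ ∀ x y : M.carrier, ∀ z ∈ M.add x y, f z ∈ N.add (f x) (f y)

/-- `ℤ/2ℤ` as a canonical hypergroup with singleton sums. -/
def Z2 : CanHG where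
  carrier := ZMod 2
  add a b := {a + b}
  zero := 0
  neg a := -a
  comm := by intro x y; rw [add_comm]
  total := by intro x y; exact ⟨x + y, rfl⟩
  zero_add := by intro x; simp
  assoc := by
    intro x y z
    ext w
    simp only [Set.mem_setOf_eq, Set.mem_singleton_iff]
    constructor
    · rintro ⟨u, rfl, rfl⟩; exact ⟨x + y, rfl, (add_assoc x y z).symm⟩
    · rintro ⟨u, rfl, rfl⟩; exact ⟨y + z, rfl, add_assoc x y z⟩
  rev := by
    intro x y z h
    simp only [Set.mem_singleton_iff] at h ⊢
    rw [h]; abel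

/-! Auxiliary: a 5-element canonical hypergroup witnessing the failure. -/

instance : Fintype Z2.carrier := inferInstanceAs (Fintype (ZMod 2))
instance : DecidableEq Z2.carrier := inferInstanceAs (DecidableEq (ZMod 2))
instance : Add Z2.carrier := inferInstanceAs (Add (ZMod 2))
instance : OfNat Z2.carrier 0 := inferInstanceAs (OfNat (ZMod 2) 0)
instance : OfNat Z2.carrier 1 := inferInstanceAs (OfNat (ZMod 2) 1)

def Rtab : Fin 5 → Fin 5 → Fin 5 → Bool :=
  ![![![true, false, false, false, false], ![false, true, false, false, false], ![false, false, true, false, false], ![false, false, false, true, false], ![false, false, false, false, true]],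
    ![![false, true, false, false, false], ![true, false, false, true, true], ![false, false, false, true, true], ![false, true, true, false, false], ![false, true, true, false, false]],
    ![![false, false, true, false, false], ![false, false, false, true, true], ![true, false, false, true, true], ![false, true, true, false, false], ![false, true, true, false, false]],
    ![![false, false, false, true, false], ![false, true, true, false, false], ![false, true, true, false, false], ![true, false, false, false, true], ![false, false, false, true, true]],
    ![![false, false, false, false, true], ![false, true, true, false, false], ![false, true, true, false, false], ![false, false, false, true, true], ![true, false, false, true, false]]]

def HW : CanHG where
  carrier := Fin 5
  add a b := {c | Rtab a b c = true}
  zero := 0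
  neg a := a
  comm := by
    intro x y; ext c; simp only [Set.mem_setOf_eq]
    revert x y c; decide
  total := by
    intro x y
    simp only [Set.Nonempty, Set.mem_setOf_eq]
    revert x y; decide
  zero_add := by
    intro x; ext c
    simp only [Set.mem_setOf_eq, Set.mem_singleton_iff]
    revert x c; decide
  assoc := by
    intro x y z; ext w
    simp only [Set.mem_setOf_eq]
    revert x y z w; decide
  rev := by
    intro x y z
    simp only [Set.mem_setOf_eq]
    revert x y z; decide

attribute [reducible] HW

instance : Fintype HW.carrier := inferInstanceAs (Fintype (Fin 5))
instance : DecidableEq HW.carrier := inferInstanceAs (DecidableEq (Fin 5))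

/-- The automorphism of `HW` swapping `3` and `4`. -/
def sigW : HW.carrier → HW.carrier := (![0, 1, 2, 4, 3] : Fin 5 → Fin 5)

lemma isHom_comp {M N P : CanHG} {f : M.carrier → N.carrier}
    {g : N.carrier → P.carrier} (hf : IsHom M N f) (hg : IsHom N P g) :
    IsHom M P (g ∘ f) := by
  refine ⟨by simp [Function.comp, hf.1, hg.1], ?_⟩
  intro x y z hz
  exact hg.2 (f x) (f y) (f z) (hf.2 x y z hz)

lemma isHom_sigW : IsHom HW HW sigW := by
  constructor
  · show sigW (0 : Fin 5) = (0 : Fin 5)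
    decide
  · intro x y z
    show Rtab x y z = true → Rtab (sigW x) (sigW y) (sigW z) = true
    revert x y z; decide

/-- The first embedding `ℤ/2 → HW`, `1 ↦ 1`. -/
def fW1 : Z2.carrier → HW.carrier := fun a => if a = 0 then (0 : Fin 5) else (1 : Fin 5)

/-- The second embedding `ℤ/2 → HW`, `1 ↦ 2`. -/
def fW2 : Z2.carrier → HW.carrier := fun a => if a = 0 then (0 : Fin 5) else (2 : Fin 5)

lemma sigW_fW1 : ∀ t : Z2.carrier, sigW (fW1 t) = fW1 t := by decide

lemma sigW_fW2 : ∀ t : Z2.carrier, sigW (fW2 t) = fW2 t := by decide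

lemma isHom_fW1 : IsHom Z2 HW fW1 := by
  constructor
  · show fW1 0 = (0 : Fin 5)
    decide
  · intro x y z hz
    have h : z = x + y := hz
    subst h
    clear hz
    show Rtab (fW1 x) (fW1 y) (fW1 (x + y)) = true
    revert x y; decide

lemma isHom_fW2 : IsHom Z2 HW fW2 := by
  constructor
  · show fW2 0 = (0 : Fin 5)
    decide
  · intro x y z hz
    have h : z = x + y := hz
    subst h
    clear hz
    show Rtab (fW2 x) (fW2 y) (fW2 (x + y)) = true
    revert x y; decide

/-- The coproduct `ℤ/2ℤ ⊔ ℤ/2ℤ` does not exist in the category of canonical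
hypergroups. -/
theorem stmt_17 :
    ¬ ∃ (Gc : CanHG) (i₁ i₂ : {f : Z2.carrier → Gc.carrier // IsHom Z2 Gc f}),
      ∀ (H : CanHG) (f₁ f₂ : {f : Z2.carrier → H.carrier // IsHom Z2 H f}),
        ∃! g : {g : Gc.carrier → H.carrier // IsHom Gc H g},
          g.1 ∘ i₁.1 = f₁.1 ∧ g.1 ∘ i₂.1 = f₂.1 := by
  rintro ⟨Gc, i₁, i₂, hu⟩
  obtain ⟨g, ⟨hg1, hg2⟩, hgu⟩ := hu HW ⟨fW1, isHom_fW1⟩ ⟨fW2, isHom_fW2⟩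
  -- sigW ∘ g is another solution, so it equals g by uniqueness
  have hσg : (⟨sigW ∘ g.1, isHom_comp g.2 isHom_sigW⟩ :
      {g : Gc.carrier → HW.carrier // IsHom Gc HW g}) = g := by
    apply hgu
    constructor
    · funext t
      have h : g.1 (i₁.1 t) = fW1 t := congrFun hg1 t
      show sigW (g.1 (i₁.1 t)) = fW1 t
      rw [h]; exact sigW_fW1 t
    · funext t
      have h : g.1 (i₂.1 t) = fW2 t := congrFun hg2 t
      show sigW (g.1 (i₂.1 t)) = fW2 t
      rw [h]; exact sigW_fW2 t
  obtain ⟨c, hc⟩ := Gc.total (i₁.1 1) (i₂.1 1)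
  have hmem : g.1 c ∈ HW.add (g.1 (i₁.1 1)) (g.1 (i₂.1 1)) :=
    g.2.2 (i₁.1 1) (i₂.1 1) c hc
  have e1 : g.1 (i₁.1 1) = fW1 1 := congrFun hg1 1
  have e2 : g.1 (i₂.1 1) = fW2 1 := congrFun hg2 1
  rw [e1, e2] at hmem
  have hmem' : Rtab (fW1 1) (fW2 1) (g.1 c) = true := hmem
  have hfix : sigW (g.1 c) = g.1 c := by
    have := congrArg Subtype.val hσg
    exact congrFun this c
  have key : ∀ t : HW.carrier, Rtab (fW1 1) (fW2 1) t = true → sigW t = t → False := by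
    decide
  exact key _ hmem' hfix
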